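/- arXiv:1304.7642 — 7 statements merged into one kernel-verified Lean document; each statement's English description precedes it below -/
import Mathlib

section
/- Let n ∈ ℕ, let a, y, z : Fin n → ℝ, and let s : Fin n → ℝ be nonincreasing (s k ≥ s l whenever k ≤ l) and nonnegative. Let σ and τ be permutations of Fin n such that k ↦ y(σ k) and k ↦ z(τ k) are strictly decreasing. Assume that for all indices i, j, if y i > y j and z i < z j then a i > a j. Then ∑_{k} a(σ k) · s k ≥ ∑_{k} a(τ k) · s k. -/
open Finset

private lemma abel_id (f s : ℕ → ℝ) (n : ℕ) :
    ∑ k ∈ range n, f k * s k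
      = ∑ m ∈ range n, (∑ k ∈ range (m+1), f k) * (s m - s (m+1))
        + (∑ k ∈ range n, f k) * s n := by
  induction n with
  | zero => simp
  | succ n ih =>
    rw [sum_range_succ (fun k => f k * s k), ih,
      sum_range_succ (fun m => (∑ k ∈ range (m+1), f k) * (s m - s (m+1))),
      sum_range_succ f n]
    ring

private lemma abel_ineq (f g s : ℕ → ℝ) (n : ℕ)
    (hpre : ∀ m, ∑ k ∈ range m, g k ≤ ∑ k ∈ range m, f k)
    (hs : ∀ k, s (k+1) ≤ s k) (hsn : s n = 0) :
    ∑ k ∈ range n, g k * s k ≤ ∑ k ∈ range n, f k * s k := by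
  rw [abel_id f s n, abel_id g s n, hsn, mul_zero, mul_zero, add_zero, add_zero]
  refine sum_le_sum fun m _ => ?_
  exact mul_le_mul_of_nonneg_right (hpre (m+1)) (sub_nonneg.mpr (hs m))

private lemma range_sum_eq (n : ℕ) (b : Fin n → ℝ) (m : ℕ) :
    ∑ k ∈ range m, (if h : k < n then b ⟨k, h⟩ else 0)
      = ∑ k ∈ univ.filter (fun k : Fin n => (k : ℕ) < m), b k := by
  rw [← Finset.sum_filter_of_ne (p := fun k => k < n)
    (f := fun k => if h : k < n then b ⟨k, h⟩ else 0)
    (by intro x _ hx; by_contra h; exact hx (dif_neg h))]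
  have himg : (univ.filter (fun k : Fin n => (k : ℕ) < m)).image Fin.val
      = (range m).filter (fun k => k < n) := by
    ext i
    simp only [mem_image, mem_filter, mem_range, mem_univ, true_and]
    constructor
    · rintro ⟨k, hk, rfl⟩; exact ⟨hk, k.isLt⟩
    · rintro ⟨him, hin⟩; exact ⟨⟨i, hin⟩, him, rfl⟩
  rw [← himg, Finset.sum_image (by intro x _ y _ h; exact Fin.val_injective h)]
  refine Finset.sum_congr rfl fun k _ => ?_
  rw [dif_pos k.isLt]

/-- Lemma 2 (per-realisation): if whenever the rankings `y` and `z` disagree about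
a pair of advertisers the ranking `y` places the one with larger weight `a` higher,
then the virtual surplus of the allocation induced by `y` is at least that induced by `z`. -/
theorem ranking_comparison (n : ℕ) (a y z : Fin n → ℝ) (s : Fin n → ℝ)
    (hs_mono : ∀ k l : Fin n, k ≤ l → s l ≤ s k)
    (hs_nonneg : ∀ k : Fin n, 0 ≤ s k)
    (σ τ : Equiv.Perm (Fin n))
    (hσ : ∀ k l : Fin n, k < l → y (σ l) < y (σ k))
    (hτ : ∀ k l : Fin n, k < l → z (τ l) < z (τ k))
    (ha : ∀ i j : Fin n, y j < y i → z i < z j → a j < a i) :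
    ∑ k, a (τ k) * s k ≤ ∑ k, a (σ k) * s k := by
  -- extended sequences over ℕ
  set fσ : ℕ → ℝ := fun i => if h : i < n then a (σ ⟨i, h⟩) else 0 with hfσ
  set fτ : ℕ → ℝ := fun i => if h : i < n then a (τ ⟨i, h⟩) else 0 with hfτ
  set s' : ℕ → ℝ := fun i => if h : i < n then s ⟨i, h⟩ else 0 with hs'
  -- prefix dominance
  have hprefix : ∀ m : ℕ, ∑ k ∈ range m, fτ k ≤ ∑ k ∈ range m, fσ k := by
    intro m
    rw [hfσ, hfτ, range_sum_eq n (fun k => a (σ k)) m, range_sum_eq n (fun k => a (τ k)) m]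
    set K : Finset (Fin n) := univ.filter (fun k : Fin n => (k : ℕ) < m) with hK
    set S : Finset (Fin n) := K.image σ with hS
    set T : Finset (Fin n) := K.image τ with hT
    have hsum : ∀ (π : Equiv.Perm (Fin n)), ∑ k ∈ K, a (π k) = ∑ i ∈ K.image π, a i := by
      intro π
      rw [Finset.sum_image (fun x _ y _ h => π.injective h)]
    rw [hsum σ, hsum τ, ← hS, ← hT]
    -- membership characterizations
    have hmemS : ∀ i : Fin n, i ∈ S ↔ (σ.symm i : ℕ) < m := by
      intro i
      simp only [hS, hK, mem_image, mem_filter, mem_univ, true_and]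
      constructor
      · rintro ⟨k, hk, rfl⟩; simpa using hk
      · intro h; exact ⟨σ.symm i, h, σ.apply_symm_apply i⟩
    have hmemT : ∀ i : Fin n, i ∈ T ↔ (τ.symm i : ℕ) < m := by
      intro i
      simp only [hT, hK, mem_image, mem_filter, mem_univ, true_and]
      constructor
      · rintro ⟨k, hk, rfl⟩; simpa using hk
      · intro h; exact ⟨τ.symm i, h, τ.apply_symm_apply i⟩
    -- key pairwise comparison
    have key : ∀ i ∈ T \ S, ∀ j ∈ S \ T, a i < a j := by
      intro i hi j hj
      rw [mem_sdiff] at hi hj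
      have hi1 : (τ.symm i : ℕ) < m := (hmemT i).1 hi.1
      have hi2 : ¬ (σ.symm i : ℕ) < m := fun h => hi.2 ((hmemS i).2 h)
      have hj1 : (σ.symm j : ℕ) < m := (hmemS j).1 hj.1
      have hj2 : ¬ (τ.symm j : ℕ) < m := fun h => hj.2 ((hmemT j).2 h)
      have hyz : y i < y j := by
        have hlt : σ.symm j < σ.symm i := by rw [Fin.lt_def]; omega
        have := hσ _ _ hlt
        simpa [σ.apply_symm_apply] using this
      have hzz : z j < z i := by
        have hlt : τ.symm i < τ.symm j := by rw [Fin.lt_def]; omega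
        have := hτ _ _ hlt
        simpa [τ.apply_symm_apply] using this
      exact ha j i hyz hzz
    -- equal cardinalities of the symmetric differences
    have hcard : (T \ S).card = (S \ T).card := by
      have h1 := Finset.card_sdiff_add_card_inter T S
      have h2 := Finset.card_sdiff_add_card_inter S T
      have hST : S.card = T.card := by
        rw [hS, hT, Finset.card_image_of_injective _ σ.injective,
          Finset.card_image_of_injective _ τ.injective]
      rw [Finset.inter_comm] at h2
      omega
    -- compare the sums
    have hdiff : ∑ i ∈ T \ S, a i ≤ ∑ j ∈ S \ T, a j := by
      let e : (T \ S : Finset (Fin n)) ≃ (S \ T : Finset (Fin n)) :=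
        Finset.equivOfCardEq hcard
      calc ∑ i ∈ T \ S, a i = ∑ i : (T \ S : Finset (Fin n)), a i :=
            (Finset.sum_coe_sort _ _).symm
        _ = ∑ j : (S \ T : Finset (Fin n)), a (e.symm j) :=
            (Equiv.sum_comp e.symm (fun i : (T \ S : Finset (Fin n)) => a i)).symm
        _ ≤ ∑ j : (S \ T : Finset (Fin n)), a j := by
            refine sum_le_sum fun j _ => ?_
            exact le_of_lt (key _ (e.symm j).2 _ j.2)
        _ = ∑ j ∈ S \ T, a j := Finset.sum_coe_sort _ _
    calc ∑ i ∈ T, a i = ∑ i ∈ T ∩ S, a i + ∑ i ∈ T \ S, a i :=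
          (Finset.sum_inter_add_sum_sdiff T S a).symm
      _ ≤ ∑ i ∈ S ∩ T, a i + ∑ j ∈ S \ T, a j := by
          rw [Finset.inter_comm]; exact add_le_add le_rfl hdiff
      _ = ∑ i ∈ S, a i := Finset.sum_inter_add_sum_sdiff S T a
  -- s' is nonincreasing and vanishes at n
  have hs'mono : ∀ k : ℕ, s' (k + 1) ≤ s' k := by
    intro k
    simp only [hs']
    by_cases h1 : k + 1 < n
    · have h0 : k < n := by omega
      rw [dif_pos h1, dif_pos h0]
      exact hs_mono ⟨k, h0⟩ ⟨k + 1, h1⟩ (Fin.mk_le_mk.mpr (Nat.le_succ k))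
    · rw [dif_neg h1]
      by_cases h0 : k < n
      · rw [dif_pos h0]; exact hs_nonneg _
      · rw [dif_neg h0]
  have hs'n : s' n = 0 := by simp only [hs']; exact dif_neg (lt_irrefl n)
  -- convert the Fin sums to range sums
  have hconvσ : ∑ k, a (σ k) * s k = ∑ k ∈ range n, fσ k * s' k := by
    rw [← Fin.sum_univ_eq_sum_range (fun i => fσ i * s' i) n]
    refine Finset.sum_congr rfl fun k _ => ?_
    simp [hfσ, hs', k.isLt]
  have hconvτ : ∑ k, a (τ k) * s k = ∑ k ∈ range n, fτ k * s' k := by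
    rw [← Fin.sum_univ_eq_sum_range (fun i => fτ i * s' i) n]
    refine Finset.sum_congr rfl fun k _ => ?_
    simp [hfτ, hs', k.isLt]
  rw [hconvσ, hconvτ]
  exact abel_ineq fσ fτ s' n hprefix hs'mono hs'n
end

section
/- Let r > 0 and let φ : ℝ → ℝ be strictly increasing on [r, ∞) with φ(r) ≤ 0, and suppose that for all reals t > u ≥ r one has r·(φ(t) − φ(u)) ≤ u·φ(t) − t·φ(u). Let θ_i, θ_j ≥ r and w_i, w_j > 0 satisfy (θ_i − r)·w_i > (θ_j − r)·w_j and θ_i·w_i < θ_j·w_j. Then φ(θ_i)·w_i > φ(θ_j)·w_j. -/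
/-- Key implication inside Lemma 3: whenever the proposed ranking `(θ - r)·w`
disagrees with the standard ranking `θ·w`, the proposed ranking places the
advertiser with higher virtual surplus `φ(θ)·w` on top. -/
theorem proposed_ranking_correct (r : ℝ) (hr : 0 < r) (φ : ℝ → ℝ)
    (hmono : StrictMonoOn φ (Set.Ici r))
    (hφr : φ r ≤ 0)
    (hcond : ∀ t u : ℝ, r ≤ u → u < t → r * (φ t - φ u) ≤ u * φ t - t * φ u)
    (θi θj wi wj : ℝ) (hθi : r ≤ θi) (hθj : r ≤ θj)
    (hwi : 0 < wi) (hwj : 0 < wj)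
    (h1 : (θj - r) * wj < (θi - r) * wi)
    (h2 : θi * wi < θj * wj) :
    φ θj * wj < φ θi * wi := by
  have hw : wi < wj := by nlinarith
  have hθ : θj < θi := by nlinarith
  have hφ : φ θj < φ θi := hmono hθj hθi hθ
  rcases le_or_gt (φ θj) 0 with hc | hc
  · rcases le_or_gt (φ θi) 0 with hd | hd
    · nlinarith
    · nlinarith
  · have hrj : r < θj := by
      rcases eq_or_lt_of_le hθj with h | h
      · exfalso; rw [← h] at hc; linarith
      · exact h
    have hkey := hcond θi θj hθj hθ
    -- (θj - r) * φ θi ≥ (θi - r) * φ θj > 0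
    have hA : (θi - r) * φ θj ≤ (θj - r) * φ θi := by nlinarith
    have hApos : 0 < (θi - r) * φ θj := mul_pos (by linarith) hc
    have hBpos : 0 < (θj - r) * wj := mul_pos (by linarith) hwj
    have key : (θi - r) * φ θj * ((θj - r) * wj) < (θj - r) * φ θi * ((θi - r) * wi) :=
      mul_lt_mul' hA h1 hBpos.le (lt_of_lt_of_le hApos hA)
    have hab : 0 < (θi - r) * (θj - r) := mul_pos (by linarith) (by linarith)
    nlinarith [key, hab, mul_pos hab (sub_pos.mpr (show φ θj * wj < φ θi * wi from by nlinarith [key]))]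
end

section
/- Let r > 0 and let φ : [r, ∞) → ℝ be differentiable with φ'(t) > 0 for all t ≥ r, φ(r) ≤ 0, and r ≤ t − φ(t)/φ'(t) for all t ≥ r. Then for all θ_i > θ_j ≥ r one has (θ_j − r)·φ(θ_i) ≥ (θ_i − r)·φ(θ_j); equivalently, r·(φ(θ_i) − φ(θ_j)) ≤ θ_j·φ(θ_i) − θ_i·φ(θ_j). -/
/-- Appendix C (proof of Lemma 3): under condition (e-maincond), the reserve `r`
is at most `g(θᵢ, θⱼ)` for all `θᵢ > θⱼ ≥ r`. -/
theorem reserve_le_g (r : ℝ) (hr : 0 < r) (φ φ' : ℝ → ℝ)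
    (hderiv : ∀ t : ℝ, r ≤ t → HasDerivAt φ (φ' t) t)
    (hpos : ∀ t : ℝ, r ≤ t → 0 < φ' t)
    (hφr : φ r ≤ 0)
    (hcond : ∀ t : ℝ, r ≤ t → r ≤ t - φ t / φ' t) :
    ∀ θi θj : ℝ, r ≤ θj → θj < θi →
      (θj - r) * φ θi ≥ (θi - r) * φ θj ∧
      r * (φ θi - φ θj) ≤ θj * φ θi - θi * φ θj := by
  intro θi θj hj hji
  have hmul : ∀ t : ℝ, r ≤ t → φ t ≤ (t - r) * φ' t := by
    intro t ht
    have h := hcond t ht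
    have hp := hpos t ht
    have : φ t / φ' t ≤ t - r := by linarith
    calc φ t = (φ t / φ' t) * φ' t := by field_simp
    _ ≤ (t - r) * φ' t := by nlinarith
  have key : (θj - r) * φ θi ≥ (θi - r) * φ θj := by
    rcases eq_or_lt_of_le hj with h | h
    · -- θj = r
      rw [← h]
      have h1 : φ θj ≤ 0 := by rw [← h]; exact hφr
      have h2 : (0:ℝ) < θi - θj := by linarith
      nlinarith
    · -- r < θj
      set f : ℝ → ℝ := fun t => φ t / (t - r) with hf
      set f' : ℝ → ℝ := fun t => (φ' t * (t - r) - φ t * 1) / (t - r) ^ 2 with hf'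
      have hd : ∀ t : ℝ, r < t → HasDerivAt f (f' t) t := by
        intro t ht
        exact (hderiv t ht.le).div ((hasDerivAt_id t).sub_const r) (by linarith)
      have hcont : ContinuousOn f (Set.Icc θj θi) := by
        intro t ht
        exact ((hd t (lt_of_lt_of_le h ht.1)).continuousAt).continuousWithinAt
      have hdiff : ∀ t ∈ Set.Ioo θj θi, HasDerivAt f (f' t) t :=
        fun t ht => hd t (lt_trans h ht.1)
      obtain ⟨c, hc, hceq⟩ := exists_hasDerivAt_eq_slope f f' hji hcont hdiff
      have hcr : r < c := lt_trans h hc.1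
      have hnum : 0 ≤ φ' c * (c - r) - φ c * 1 := by
        have := hmul c hcr.le
        nlinarith
      have hfc : 0 ≤ f' c := by
        rw [hf']
        positivity
      rw [hceq] at hfc
      have hle : f θj ≤ f θi := by
        have h2 : (0:ℝ) < θi - θj := by linarith
        have := mul_nonneg hfc h2.le
        rw [div_mul_cancel₀] at this
        · linarith
        · linarith
      have hji' : (0:ℝ) < θj - r := by linarith
      have hii' : (0:ℝ) < θi - r := by linarith
      rw [hf] at hle
      simp only [div_le_div_iff₀ hji' hii'] at hle
      linarith
  exact ⟨key, by nlinarith [key]⟩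
end

section
/- Define φ : (0, 1] → ℝ by φ(t) = 4t/3 − 1/6 − 1/(6t) and ψ : (0, 1] → ℝ by ψ(t) = 4/3 + 1/(6t²). Then: (i) for all t ∈ (0, 1), φ(t) = t − (1 − F(t))/f(t), where F(t) = 3t² − 2t³ and f(t) = 6t(1 − t); (ii) ψ(t) is the derivative of φ at every t ∈ (0, 1); (iii) the number θ̄ := (1 + √33)/16 satisfies φ(θ̄) = 0 and 1/3 < θ̄ < 1; (iv) 1 − φ(1)/ψ(1) = 1/3. Consequently, for every r ∈ (1/3, θ̄] there exists t ∈ [r, 1] (namely t = 1) with t − φ(t)/ψ(t) < r. -/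
/-- The virtual value function of the Beta(2,2) distribution. -/
noncomputable def phiBeta (t : ℝ) : ℝ := 4 * t / 3 - 1 / 6 - 1 / (6 * t)

/-- Its derivative. -/
noncomputable def psiBeta (t : ℝ) : ℝ := 4 / 3 + 1 / (6 * t ^ 2)

lemma sqrt33_sq : Real.sqrt 33 ^ 2 = 33 := Real.sq_sqrt (by norm_num)

lemma sqrt33_lb : (5:ℝ) < Real.sqrt 33 := by
  nlinarith [sqrt33_sq, Real.sqrt_nonneg 33]

lemma sqrt33_ub : Real.sqrt 33 < 6 := by
  nlinarith [sqrt33_sq, Real.sqrt_nonneg 33]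

/-- The Beta(2,2) counterexample: condition (e-maincond) fails for every
reserve `r` in the nonempty interval `(1/3, θ̄]`, where `θ̄ = (1+√33)/16`
is the revenue-optimal reserve. -/
theorem beta_counterexample :
    (∀ t ∈ Set.Ioo (0 : ℝ) 1,
      phiBeta t = t - (1 - (3 * t ^ 2 - 2 * t ^ 3)) / (6 * t * (1 - t))) ∧
    (∀ t ∈ Set.Ioo (0 : ℝ) 1, HasDerivAt phiBeta (psiBeta t) t) ∧
    (phiBeta ((1 + Real.sqrt 33) / 16) = 0 ∧
      1 / 3 < (1 + Real.sqrt 33) / 16 ∧ (1 + Real.sqrt 33) / 16 < 1) ∧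
    (1 - phiBeta 1 / psiBeta 1 = 1 / 3) ∧
    (∀ r : ℝ, 1 / 3 < r → r ≤ (1 + Real.sqrt 33) / 16 →
      ∃ t ∈ Set.Icc r (1 : ℝ), t - phiBeta t / psiBeta t < r) := by
  have hs2 := sqrt33_sq
  have hlb := sqrt33_lb
  have hub := sqrt33_ub
  refine ⟨?_, ?_, ⟨?_, ?_, ?_⟩, ?_, ?_⟩
  · rintro t ⟨ht0, ht1⟩
    have h1 : t ≠ 0 := ne_of_gt ht0
    have h2 : (1 : ℝ) - t ≠ 0 := by linarith
    unfold phiBeta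
    field_simp
    ring
  · rintro t ⟨ht0, _⟩
    have h1 : t ≠ 0 := ne_of_gt ht0
    have h : HasDerivAt (fun t : ℝ => 4 * t / 3 - 1 / 6 - 1 / (6 * t))
        (4 / 3 - (0 * (6 * t) - 1 * 6) / (6 * t) ^ 2) t := by
      have ha : HasDerivAt (fun t : ℝ => 4 * t / 3 - 1 / 6) (4 / 3) t := by
        simpa using ((hasDerivAt_id t).const_mul 4 |>.div_const 3).sub_const (1/6 : ℝ)
      have hc : HasDerivAt (fun t : ℝ => 6 * t) 6 t := by
        simpa using (hasDerivAt_id t).const_mul 6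
      have hb : HasDerivAt (fun t : ℝ => 1 / (6 * t)) ((0 * (6 * t) - 1 * 6) / (6 * t) ^ 2) t :=
        (hasDerivAt_const t (1:ℝ)).div hc (by simp [h1])
      exact ha.sub hb
    convert h using 1
    · rfl
    unfold psiBeta
    field_simp
    ring
  · have hpos : (0:ℝ) < (1 + Real.sqrt 33) / 16 := by linarith
    have hne : (1 + Real.sqrt 33) / 16 ≠ 0 := ne_of_gt hpos
    unfold phiBeta
    field_simp
    nlinarith [hs2]
  · linarith
  · linarith
  · unfold phiBeta psiBeta
    norm_num
  · intro r hr1 hr2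
    refine ⟨1, ⟨by linarith, le_refl 1⟩, ?_⟩
    unfold phiBeta psiBeta
    norm_num
    linarith
end

section
/- Let θ₁ = 1, w₁ = 7/10, θ₂ = 3/5, w₂ = 1, r = 1/2, x₁ = 1, x₂ = 1/2. Then there is no real number b₂ such that both (θ₁·w₁ − max(r·w₁, b₂·w₂))·x₁ ≥ (θ₁·w₁ − r·w₁)·x₂ and (θ₂·w₂ − r·w₂)·x₂ ≥ (θ₂·w₂ − max(r·w₂, b₂·w₂))·x₁ hold. -/
/-- Appendix A counterexample: with `θ₁ = 1, w₁ = 7/10, θ₂ = 3/5, w₂ = 1, r = 1/2,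
x₁ = 1, x₂ = 1/2`, no bid `b₂` satisfies both SNE inequalities, so no SNE of the
standard ranking with a reserve price can rank the advertisers by `θᵢ·wᵢ`. -/
theorem no_order_preserving_sne :
    ¬ ∃ b₂ : ℝ,
      ((1 : ℝ) * (7 / 10) - max ((1 / 2) * (7 / 10)) (b₂ * 1)) * 1 ≥
        ((1 : ℝ) * (7 / 10) - (1 / 2) * (7 / 10)) * (1 / 2) ∧
      ((3 / 5 : ℝ) * 1 - (1 / 2) * 1) * (1 / 2) ≥
        ((3 / 5 : ℝ) * 1 - max ((1 / 2) * 1) (b₂ * 1)) * 1 := by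
  rintro ⟨b, h1, h2⟩
  rcases le_total (b * 1) ((1:ℝ)/2 * 1) with h | h
  · rw [max_eq_left h] at h2
    norm_num at h2
  · have h7 : max ((1:ℝ)/2 * (7/10)) (b * 1) = b * 1 := by
      apply max_eq_right; nlinarith
    rw [max_eq_right (by linarith : (1:ℝ)/2 * 1 ≤ b * 1)] at h2
    rw [h7] at h1
    nlinarith
end

section
/- Let r > 0 and let φ : ℝ → ℝ be strictly increasing on [r, ∞) with φ(r) ≤ 0, and suppose that for all reals t > u ≥ r one has r·(φ(t) − φ(u)) ≤ u·φ(t) − t·φ(u). Let n ∈ ℕ and let θ, w : Fin n → ℝ satisfy θ i > r and w i > 0 for all i. Let s : Fin n → ℝ be nonincreasing and nonnegative, and let σ, τ be permutations of Fin n such that k ↦ (θ(σ k) − r)·w(σ k) and k ↦ θ(τ k)·w(τ k) are strictly decreasing. Then ∑_{k} φ(θ(σ k))·w(σ k)·s k ≥ ∑_{k} φ(θ(τ k))·w(τ k)·s k. -/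
private lemma pairwise_key (r t u wi wj : ℝ) (φ : ℝ → ℝ)
    (hr : 0 < r)
    (hmono : StrictMonoOn φ (Set.Ici r))
    (hcond : ∀ t u : ℝ, r ≤ u → u < t → r * (φ t - φ u) ≤ u * φ t - t * φ u)
    (ht : r < t) (hu : r < u) (hwi : 0 < wi) (hwj : 0 < wj)
    (h1 : (u - r) * wj < (t - r) * wi) (h2 : t * wi < u * wj) :
    φ u * wj ≤ φ t * wi := by
  have hwij : wi < wj := by nlinarith
  have htu : u < t := by nlinarith
  have hc := hcond t u hu.le htu
  have hφ : φ u < φ t := hmono (Set.mem_Ici.mpr hu.le) (Set.mem_Ici.mpr ht.le) htu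
  rcases le_or_gt 0 (φ t) with hpt | hpt
  · rcases le_or_gt (φ u) 0 with hpu | hpu
    · nlinarith
    · have hA : (t - r) * φ u ≤ (u - r) * φ t := by nlinarith
      nlinarith [mul_le_mul_of_nonneg_right hA hwj.le,
        mul_le_mul_of_nonneg_left h1.le (le_of_lt hpu)]
  · have hpu : φ u < 0 := hφ.trans hpt
    have hB : t * φ u ≤ u * φ t := by nlinarith
    nlinarith [mul_le_mul_of_nonneg_right hB hwi.le,
      mul_le_mul_of_nonpos_left h2.le hpu.le]

private lemma abel_nonpos (N : ℕ) (D S : ℕ → ℝ)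
    (hP : ∀ m : ℕ, ∑ i ∈ Finset.range (m + 1), D i ≤ 0)
    (hS0 : ∀ i, 0 ≤ S i)
    (hSm : ∀ i j : ℕ, i ≤ j → S j ≤ S i) :
    ∑ i ∈ Finset.range N, D i * S i ≤ 0 := by
  rcases Nat.eq_zero_or_pos N with rfl | hN
  · simp
  have hbp := Finset.sum_range_by_parts (fun i => S i) D N
  simp only [smul_eq_mul] at hbp
  have hgoal : ∑ i ∈ Finset.range N, D i * S i = ∑ i ∈ Finset.range N, S i * D i :=
    Finset.sum_congr rfl (fun i _ => mul_comm _ _)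
  rw [hgoal, hbp]
  have h1 : S (N - 1) * ∑ i ∈ Finset.range N, D i ≤ 0 := by
    have : ∑ i ∈ Finset.range N, D i ≤ 0 := by
      have := hP (N - 1)
      rwa [Nat.sub_add_cancel hN] at this
    exact mul_nonpos_of_nonneg_of_nonpos (hS0 _) this
  have h2 : 0 ≤ ∑ i ∈ Finset.range (N - 1),
      (S (i + 1) - S i) * ∑ j ∈ Finset.range (i + 1), D j := by
    apply Finset.sum_nonneg
    intro i _
    have hs : S (i + 1) - S i ≤ 0 := by linarith [hSm i (i + 1) (Nat.le_succ i)]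
    exact mul_nonneg_of_nonpos_of_nonpos hs (hP i)
  linarith

/-- Per-realisation core of Theorem 2 (revenue dominance): the virtual surplus
of the allocation induced by the proposed ranking `(θᵢ − r)·wᵢ` is at least
that induced by the standard ranking `θᵢ·wᵢ`. -/
theorem revenue_dominance_pointwise (r : ℝ) (hr : 0 < r) (φ : ℝ → ℝ)
    (hmono : StrictMonoOn φ (Set.Ici r))
    (hφr : φ r ≤ 0)
    (hcond : ∀ t u : ℝ, r ≤ u → u < t → r * (φ t - φ u) ≤ u * φ t - t * φ u)
    (n : ℕ) (θ w : Fin n → ℝ)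
    (hθ : ∀ i : Fin n, r < θ i) (hw : ∀ i : Fin n, 0 < w i)
    (s : Fin n → ℝ)
    (hs_mono : ∀ k l : Fin n, k ≤ l → s l ≤ s k)
    (hs_nonneg : ∀ k : Fin n, 0 ≤ s k)
    (σ τ : Equiv.Perm (Fin n))
    (hσ : ∀ k l : Fin n, k < l → (θ (σ l) - r) * w (σ l) < (θ (σ k) - r) * w (σ k))
    (hτ : ∀ k l : Fin n, k < l → θ (τ l) * w (τ l) < θ (τ k) * w (τ k)) :
    ∑ k, φ (θ (τ k)) * w (τ k) * s k ≤ ∑ k, φ (θ (σ k)) * w (σ k) * s k := by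
  classical
  set g : Fin n → ℝ := fun a => φ (θ (σ a)) * w (σ a) with hg
  set π : Equiv.Perm (Fin n) := τ.trans σ.symm with hπdef
  have hπk : ∀ k, σ (π k) = τ k := fun k => σ.apply_symm_apply (τ k)
  -- key pairwise comparison
  have key : ∀ k l : Fin n, k < l → π l < π k → g (π k) ≤ g (π l) := by
    intro k l hkl hπlk
    have h1 := hσ (π l) (π k) hπlk
    rw [hπk, hπk] at h1
    have h2 := hτ k l hkl
    simp only [hg, hπk]
    exact pairwise_key r (θ (τ l)) (θ (τ k)) (w (τ l)) (w (τ k)) φ hr hmono hcond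
      (hθ _) (hθ _) (hw _) (hw _) h1 h2
  -- prefix inequality in Fin-land
  have prefix_le : ∀ m : ℕ,
      ∑ k ∈ Finset.univ.filter (fun k : Fin n => (k : ℕ) ≤ m), (g (π k) - g k) ≤ 0 := by
    intro m
    set T : Finset (Fin n) := Finset.univ.filter (fun k : Fin n => (k : ℕ) ≤ m) with hT
    set S : Finset (Fin n) := T.image π with hS
    have hsum : ∑ k ∈ T, g (π k) = ∑ b ∈ S, g b :=
      (Finset.sum_image (fun x _ y _ h => π.injective h)).symm
    have hcardST : (S \ T).card = (T \ S).card := by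
      have h1 : S.card = T.card := Finset.card_image_of_injective T π.injective
      have h2 := Finset.card_sdiff_add_card_inter S T
      have h3 := Finset.card_sdiff_add_card_inter T S
      rw [Finset.inter_comm] at h3
      omega
    have cross : ∀ b ∈ S \ T, ∀ a ∈ T \ S, g b ≤ g a := by
      intro b hb a ha
      obtain ⟨hbS, hbT⟩ := Finset.mem_sdiff.mp hb
      obtain ⟨haT, haS⟩ := Finset.mem_sdiff.mp ha
      obtain ⟨k, hkT, hkb⟩ := Finset.mem_image.mp hbS
      have hla : π (π.symm a) = a := π.apply_symm_apply a
      have hlT : π.symm a ∉ T := fun h => haS (Finset.mem_image.mpr ⟨π.symm a, h, hla⟩)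
      have hkm : (k : ℕ) ≤ m := (Finset.mem_filter.mp hkT).2
      have hlm : ¬ ((π.symm a : Fin n) : ℕ) ≤ m := fun h =>
        hlT (Finset.mem_filter.mpr ⟨Finset.mem_univ _, h⟩)
      have ham : (a : ℕ) ≤ m := (Finset.mem_filter.mp haT).2
      have hbm : ¬ ((b : Fin n) : ℕ) ≤ m := fun h =>
        hbT (Finset.mem_filter.mpr ⟨Finset.mem_univ _, h⟩)
      have hkl : k < π.symm a := by rw [Fin.lt_def]; omega
      have hπlk : π (π.symm a) < π k := by rw [hla, hkb, Fin.lt_def]; omega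
      have := key k (π.symm a) hkl hπlk
      rwa [hkb, hla] at this
    have main : ∑ k ∈ T, g (π k) ≤ ∑ k ∈ T, g k := by
      rw [hsum]
      rcases (T \ S).eq_empty_or_nonempty with hemp | hne
      · have hTS : T ⊆ S := Finset.sdiff_eq_empty_iff_subset.mp hemp
        have : T = S := Finset.eq_of_subset_of_card_le hTS
          (le_of_eq (Finset.card_image_of_injective T π.injective))
        rw [this]
      · obtain ⟨a₀, ha₀, ha₀min⟩ := Finset.exists_min_image (T \ S) g hne
        have e1 : ∑ b ∈ S \ T, g b ≤ (S \ T).card • g a₀ :=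
          Finset.sum_le_card_nsmul _ _ _ (fun b hb => cross b hb a₀ ha₀)
        have e2 : (T \ S).card • g a₀ ≤ ∑ a ∈ T \ S, g a :=
          Finset.card_nsmul_le_sum _ _ _ (fun a ha => ha₀min a ha)
        have e3 := Finset.sum_inter_add_sum_sdiff S T g
        have e4 := Finset.sum_inter_add_sum_sdiff T S g
        rw [Finset.inter_comm] at e4
        rw [hcardST] at e1
        linarith
    rw [Finset.sum_sub_distrib]
    linarith
  -- extended ℕ-indexed functions
  set D : ℕ → ℝ := fun i => if h : i < n then g (π ⟨i, h⟩) - g ⟨i, h⟩ else 0 with hD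
  set Sn : ℕ → ℝ := fun i => if h : i < n then s ⟨i, h⟩ else 0 with hSn
  have hDfin : ∀ k : Fin n, D (k : ℕ) = g (π k) - g k := by
    intro k; simp only [hD, dif_pos k.isLt]
  have hSfin : ∀ k : Fin n, Sn (k : ℕ) = s k := by
    intro k; simp only [hSn, dif_pos k.isLt]
  have hP : ∀ m : ℕ, ∑ i ∈ Finset.range (m + 1), D i ≤ 0 := by
    intro m
    have step : ∑ i ∈ Finset.range (m + 1), D i
        = ∑ k ∈ Finset.univ.filter (fun k : Fin n => (k : ℕ) ≤ m), (g (π k) - g k) := by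
      set N' : ℕ := max (m + 1) n with hN'
      have e0 : ∀ i ∈ Finset.range (m + 1), D i = (if i ≤ m then D i else 0) := by
        intro i hi
        rw [if_pos (Nat.lt_succ_iff.mp (Finset.mem_range.mp hi))]
      rw [Finset.sum_congr rfl e0]
      have e1 : ∑ i ∈ Finset.range (m + 1), (if i ≤ m then D i else 0)
          = ∑ i ∈ Finset.range N', (if i ≤ m then D i else 0) := by
        apply Finset.sum_subset (Finset.range_subset_range.mpr (le_max_left _ _))
        intro i _ hi
        rw [if_neg (fun h => hi (Finset.mem_range.mpr (Nat.lt_succ_of_le h)))]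
      rw [e1]
      have e2 : ∑ i ∈ Finset.range N', (if i ≤ m then D i else 0)
          = ∑ i ∈ Finset.range n, (if i ≤ m then D i else 0) := by
        symm
        apply Finset.sum_subset (Finset.range_subset_range.mpr (le_max_right _ _))
        intro i _ hi
        have hin : ¬ i < n := fun h => hi (Finset.mem_range.mpr h)
        simp only [hD, dif_neg hin, ite_self]
      rw [e2]
      rw [← Fin.sum_univ_eq_sum_range (fun i => if i ≤ m then D i else 0) n]
      rw [Finset.sum_filter]
      apply Finset.sum_congr rfl
      intro k _
      by_cases hk : (k : ℕ) ≤ m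
      · rw [if_pos hk, if_pos hk, hDfin]
      · rw [if_neg hk, if_neg hk]
    rw [step]
    exact prefix_le m
  have hS0 : ∀ i, 0 ≤ Sn i := by
    intro i
    simp only [hSn]
    split
    · exact hs_nonneg _
    · exact le_refl 0
  have hSm : ∀ i j : ℕ, i ≤ j → Sn j ≤ Sn i := by
    intro i j hij
    simp only [hSn]
    split
    · rename_i hj
      rw [dif_pos (lt_of_le_of_lt hij hj)]
      exact hs_mono _ _ hij
    · split
      · exact hs_nonneg _
      · exact le_refl 0
  have habel := abel_nonpos n D Sn hP hS0 hSm
  have hfin : ∑ i ∈ Finset.range n, D i * Sn i = ∑ k : Fin n, (g (π k) - g k) * s k := by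
    rw [← Fin.sum_univ_eq_sum_range (fun i => D i * Sn i) n]
    exact Finset.sum_congr rfl (fun k _ => by rw [hDfin, hSfin])
  rw [hfin] at habel
  have hL : ∑ k : Fin n, φ (θ (τ k)) * w (τ k) * s k = ∑ k : Fin n, g (π k) * s k := by
    apply Finset.sum_congr rfl
    intro k _
    simp only [hg, hπk]
  rw [hL]
  have hexp : ∑ k : Fin n, (g (π k) - g k) * s k
      = ∑ k : Fin n, g (π k) * s k - ∑ k : Fin n, g k * s k := by
    rw [← Finset.sum_sub_distrib]
    exact Finset.sum_congr rfl (fun k _ => by ring)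
  rw [hexp] at habel
  linarith
end

section
/- Let n ≥ 1 and let Y_1 ≥ Y_2 ≥ ⋯ ≥ Y_n ≥ 0 and x_1 ≥ x_2 ≥ ⋯ ≥ x_n be real numbers. For each i ∈ {1,…,n} define P_i := ∑_{j=i+1}^{n} Y_j·(x_{j−1} − x_j). Then for all i, j ∈ {1,…,n}: Y_i·x_i − P_i ≥ Y_i·x_j − P_j. -/
lemma anti_aux (f : ℕ → ℝ) (n : ℕ)
    (h : ∀ j : ℕ, 1 ≤ j → j < n → f (j + 1) ≤ f j) :
    ∀ b a : ℕ, 1 ≤ a → a ≤ b → b ≤ n → f b ≤ f a := by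
  intro b
  induction b with
  | zero => intro a ha hab _; omega
  | succ b ih =>
    intro a ha hab hbn
    rcases Nat.lt_or_ge a (b + 1) with hlt | hge
    · calc f (b + 1) ≤ f b := h b (by omega) (by omega)
        _ ≤ f a := ih a ha (by omega) (by omega)
    · have : a = b + 1 := by omega
      rw [this]

lemma tel_aux (x : ℕ → ℝ) (i : ℕ) (hi : 1 ≤ i) :
    ∀ j : ℕ, i ≤ j → ∑ k ∈ Finset.Icc (i + 1) j, (x (k - 1) - x k) = x i - x j := by
  intro j
  induction j with
  | zero => intro h; omega
  | succ j ih =>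
    intro hij
    rcases Nat.lt_or_ge i (j + 1) with hlt | hge
    · rw [Finset.sum_Icc_succ_top (by omega), ih (by omega)]
      simp
    · have : i = j + 1 := by omega
      rw [this]
      simp

lemma diff_eq_aux (n : ℕ) (Y x : ℕ → ℝ) (P : ℕ → ℝ)
    (hP : ∀ i : ℕ, P i = ∑ j ∈ Finset.Icc (i + 1) n, Y j * (x (j - 1) - x j))
    (c i j : ℕ) (hi : 1 ≤ i) (hij : i ≤ j) (hjn : j ≤ n) :
    (Y c * x i - P i) - (Y c * x j - P j)
      = ∑ k ∈ Finset.Icc (i + 1) j, (Y c - Y k) * (x (k - 1) - x k) := by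
  have hsplit : P i = (∑ k ∈ Finset.Icc (i + 1) j, Y k * (x (k - 1) - x k)) + P j := by
    rw [hP i, hP j, Finset.Icc_add_one_left_eq_Ioc, Finset.Icc_add_one_left_eq_Ioc, Finset.Icc_add_one_left_eq_Ioc,
      Finset.sum_Ioc_consecutive _ hij hjn]
  have htel := tel_aux x i hi j hij
  have hexp : ∑ k ∈ Finset.Icc (i + 1) j, (Y c - Y k) * (x (k - 1) - x k)
      = (∑ k ∈ Finset.Icc (i + 1) j, Y c * (x (k - 1) - x k))
        - ∑ k ∈ Finset.Icc (i + 1) j, Y k * (x (k - 1) - x k) := by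
    rw [← Finset.sum_sub_distrib]
    apply Finset.sum_congr rfl
    intro k _
    ring
  rw [hexp, ← Finset.mul_sum, htel, hsplit]
  ring

/-- Existence part of Theorem 1: the lowest bid profile defined by recursion
(e-lowSNE) satisfies the SNE inequalities `Yᵢ·xᵢ − Pᵢ ≥ Yᵢ·xⱼ − Pⱼ`. -/
theorem lowest_sne_exists (n : ℕ) (hn : 1 ≤ n) (Y x : ℕ → ℝ)
    (hY_mono : ∀ j : ℕ, 1 ≤ j → j < n → Y (j + 1) ≤ Y j)
    (hY_nonneg : 0 ≤ Y n)
    (hx_mono : ∀ j : ℕ, 1 ≤ j → j < n → x (j + 1) ≤ x j)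
    (P : ℕ → ℝ)
    (hP : ∀ i : ℕ, P i = ∑ j ∈ Finset.Icc (i + 1) n, Y j * (x (j - 1) - x j)) :
    ∀ i j : ℕ, 1 ≤ i → i ≤ n → 1 ≤ j → j ≤ n →
      Y i * x j - P j ≤ Y i * x i - P i := by
  have hYanti := anti_aux Y n hY_mono
  have hxanti := anti_aux x n hx_mono
  intro i j hi hin hj hjn
  rcases le_total i j with hij | hij
  · have heq := diff_eq_aux n Y x P hP i i j hi hij hjn
    have hsum : 0 ≤ ∑ k ∈ Finset.Icc (i + 1) j, (Y i - Y k) * (x (k - 1) - x k) := by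
      apply Finset.sum_nonneg
      intro k hk
      rw [Finset.mem_Icc] at hk
      have hY : Y k ≤ Y i := hYanti k i hi (by omega) (by omega)
      have hd : x k ≤ x (k - 1) := by
        have h := hxanti k (k - 1) (by omega) (by omega) (by omega)
        exact h
      nlinarith
    linarith
  · have heq := diff_eq_aux n Y x P hP i j i hj hij hin
    have hsum : ∑ k ∈ Finset.Icc (j + 1) i, (Y i - Y k) * (x (k - 1) - x k) ≤ 0 := by
      apply Finset.sum_nonpos
      intro k hk
      rw [Finset.mem_Icc] at hk
      have hY : Y i ≤ Y k := hYanti i k (by omega) (by omega) hin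
      have hd : x k ≤ x (k - 1) := by
        have h := hxanti k (k - 1) (by omega) (by omega) (by omega)
        exact h
      nlinarith
    linarith
end
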